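/- arXiv:2008.06531 — 2 statements merged into one kernel-verified Lean document; each statement's English description precedes it below -/
import Mathlib

section
/- Let G be a finite simple graph on n vertices with no isolated vertices. Then avd(G) ≤ n/2 + Σ_{v ∈ V(G)} deg(v)/(2^{deg(v)+1} − 2). -/
open Finset

/-- `S` is a dominating set of `G`: every vertex is in `S` or adjacent to a vertex of `S`. -/
def SimpleGraph.IsDomSet {V : Type*} (G : SimpleGraph V) (S : Finset V) : Prop :=
  ∀ v : V, v ∈ S ∨ ∃ u ∈ S, G.Adj u v

/-- The family of all dominating sets of `G`. -/
noncomputable def SimpleGraph.domSets {V : Type*} [Fintype V] (G : SimpleGraph V) :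
    Finset (Finset V) :=
  @Finset.filter _ (fun S => G.IsDomSet S) (Classical.decPred _) Finset.univ

/-- The average order (cardinality) of a dominating set of `G`. -/
noncomputable def SimpleGraph.avd {V : Type*} [Fintype V] (G : SimpleGraph V) : ℝ :=
  (∑ S ∈ G.domSets, (S.card : ℝ)) / (G.domSets).card

namespace AvdProof

attribute [local instance 10] Classical.propDecidable

variable {V : Type*} [Fintype V] (G : SimpleGraph V) [DecidableRel G.Adj]

lemma mem_domSets {S : Finset V} : S ∈ G.domSets ↔ G.IsDomSet S := by
  unfold SimpleGraph.domSets
  rw [Finset.mem_filter]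
  simp only [Finset.mem_univ, true_and]

lemma isDomSet_mono {S T : Finset V} (h : S ⊆ T) (hS : G.IsDomSet S) : G.IsDomSet T := by
  intro v
  rcases hS v with hv | ⟨u, hu, hadj⟩
  · exact Or.inl (h hv)
  · exact Or.inr ⟨u, h hu, hadj⟩

lemma univ_mem_domSets : (Finset.univ : Finset V) ∈ G.domSets := by
  rw [mem_domSets]; intro v; exact Or.inl (Finset.mem_univ v)

lemma domSets_card_pos : 0 < G.domSets.card :=
  Finset.card_pos.mpr ⟨Finset.univ, univ_mem_domSets G⟩

/-- The closed neighborhood of `w` as a finset. -/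
noncomputable def NB (w : V) : Finset V := insert w (G.neighborFinset w)

lemma card_NB (w : V) : (NB G w).card = G.degree w + 1 := by
  unfold NB
  rw [Finset.card_insert_of_notMem (by
    rw [SimpleGraph.mem_neighborFinset]
    exact G.irrefl)]
  rfl

lemma nat_key (d k : ℕ) (hd : 1 ≤ d) (hk : k ≤ d + 1) :
    (2 ^ d - 1) * k ≤ d * (2 ^ (d + 1) - 2 ^ (d + 1 - k)) := by
  rcases Nat.eq_zero_or_pos k with rfl | hk1
  · simp
  have h2 : 2 ^ (d + 1) = 2 ^ d + 2 ^ d := by rw [pow_succ]; ring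
  rcases le_or_gt k d with hkd | hkd
  · calc (2 ^ d - 1) * k ≤ 2 ^ d * d := Nat.mul_le_mul (Nat.sub_le _ _) hkd
      _ ≤ d * (2 ^ (d + 1) - 2 ^ (d + 1 - k)) := by
          rw [Nat.mul_comm]
          apply Nat.mul_le_mul_left
          have h1 : 2 ^ (d + 1 - k) ≤ 2 ^ d := Nat.pow_le_pow_right (by norm_num) (by omega)
          omega
  · have hk' : k = d + 1 := by omega
    subst hk'
    have h0 : d + 1 - (d + 1) = 0 := by omega
    rw [h0, pow_zero]
    obtain ⟨m, hm⟩ : ∃ m, 2 ^ d = m + 2 := by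
      have := Nat.one_lt_two_pow_iff.mpr (by omega : d ≠ 0)
      exact ⟨2 ^ d - 2, by omega⟩
    have ha : 2 ^ (d + 1) - 1 = 2 * m + 3 := by omega
    have hb : 2 ^ d - 1 = m + 1 := by omega
    rw [ha, hb]
    nlinarith [Nat.mul_le_mul_right m hd]

lemma union_inter_cancel {R I N : Finset V} (hR : Disjoint R N) (hI : I ⊆ N) :
    (R ∪ I) ∩ N = I := by
  ext x
  simp only [Finset.mem_inter, Finset.mem_union]
  constructor
  · rintro ⟨hx | hx, hxN⟩
    · exact absurd hxN (Finset.disjoint_left.mp hR hx)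
    · exact hx
  · exact fun hx => ⟨Or.inr hx, hI hx⟩

lemma singleton_inter_spec {S R : Finset V} {w a : V} (hSD : S ∈ G.domSets)
    (hsd : S \ NB G w = R) (ha : S ∩ NB G w = {a}) :
    a ∈ NB G w ∧ S = insert a R := by
  have haS : a ∈ S ∩ NB G w := by rw [ha]; exact Finset.mem_singleton_self _
  rw [Finset.mem_inter] at haS
  refine ⟨haS.2, ?_⟩
  ext x
  rw [Finset.insert_eq, Finset.mem_union, Finset.mem_singleton, ← hsd, Finset.mem_sdiff]
  constructor
  · intro hxS
    by_cases hxN : x ∈ NB G w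
    · left
      have : x ∈ S ∩ NB G w := Finset.mem_inter.mpr ⟨hxS, hxN⟩
      rw [ha, Finset.mem_singleton] at this
      exact this
    · exact Or.inr ⟨hxS, hxN⟩
  · rintro (rfl | ⟨hxS, _⟩)
    · exact haS.1
    · exact hxS

lemma fiber_ineq (w : V) (hdeg : 0 < G.degree w) (R : Finset V) (hR : Disjoint R (NB G w)) :
    (2 ^ G.degree w - 1) *
      ((G.domSets.filter (fun S => (S ∩ NB G w).card = 1 ∧ S \ NB G w = R)).card)
    ≤ G.degree w * ((G.domSets.filter (fun S => S \ NB G w = R)).card) := by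
  set d := G.degree w with hd
  set K : Finset V := (NB G w).filter (fun x => insert x R ∈ G.domSets) with hK
  have hKsub : K ⊆ NB G w := Finset.filter_subset _ _
  have hKcard : K.card ≤ d + 1 := by
    have := Finset.card_le_card hKsub
    rwa [card_NB] at this
  -- Step a: the bad fiber injects into K
  have stepa : (G.domSets.filter (fun S => (S ∩ NB G w).card = 1 ∧ S \ NB G w = R)).card
      ≤ K.card := by
    apply Finset.card_le_card_of_injOn
      (fun S => if h : ∃ a, S ∩ NB G w = {a} then h.choose else w)
    · intro S hS
      rw [Finset.mem_coe, Finset.mem_filter] at hS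
      obtain ⟨hSD, hcard, hsd⟩ := hS
      have hex : ∃ a, S ∩ NB G w = {a} := Finset.card_eq_one.mp hcard
      simp only [dif_pos hex]
      obtain ⟨haNB, hSeq⟩ := singleton_inter_spec G hSD hsd hex.choose_spec
      rw [hK, Finset.mem_coe, Finset.mem_filter]
      exact ⟨haNB, by rw [← hSeq]; exact hSD⟩
    · intro S hS S' hS' heq
      simp only [Finset.coe_filter, Set.mem_setOf_eq] at hS hS'
      obtain ⟨hSD, hcard, hsd⟩ := hS
      obtain ⟨hSD', hcard', hsd'⟩ := hS'
      have hex : ∃ a, S ∩ NB G w = {a} := Finset.card_eq_one.mp hcard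
      have hex' : ∃ a, S' ∩ NB G w = {a} := Finset.card_eq_one.mp hcard'
      simp only [dif_pos hex, dif_pos hex'] at heq
      obtain ⟨_, h1⟩ := singleton_inter_spec G hSD hsd hex.choose_spec
      obtain ⟨_, h2⟩ := singleton_inter_spec G hSD' hsd' hex'.choose_spec
      rw [h1, h2, heq]
  -- Step b: subsets of NB meeting K inject into the fiber
  have stepb : ((NB G w).powerset.filter (fun I => (I ∩ K).Nonempty)).card
      ≤ (G.domSets.filter (fun S => S \ NB G w = R)).card := by
    apply Finset.card_le_card_of_injOn (fun I => R ∪ I)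
    · intro I hI
      rw [Finset.mem_coe, Finset.mem_filter, Finset.mem_powerset] at hI
      obtain ⟨hINB, x, hx⟩ := hI
      rw [Finset.mem_inter] at hx
      obtain ⟨hxI, hxK⟩ := hx
      rw [hK, Finset.mem_filter] at hxK
      rw [Finset.mem_coe, Finset.mem_filter, mem_domSets]
      constructor
      · apply isDomSet_mono G _ ((mem_domSets G).mp hxK.2)
        intro y hy
        rw [Finset.mem_insert] at hy
        rcases hy with rfl | hy
        · exact Finset.mem_union_right _ hxI
        · exact Finset.mem_union_left _ hy
      · rw [Finset.union_sdiff_distrib,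
          Finset.sdiff_eq_self_of_disjoint hR,
          Finset.sdiff_eq_empty_iff_subset.mpr hINB, Finset.union_empty]
    · intro I hI I' hI' heq
      simp only [Finset.coe_filter, Set.mem_setOf_eq, Finset.mem_powerset] at hI hI'
      have heq' : R ∪ I = R ∪ I' := heq
      have e1 : (R ∪ I) ∩ NB G w = I := union_inter_cancel hR hI.1
      have e2 : (R ∪ I') ∩ NB G w = I' := union_inter_cancel hR hI'.1
      rw [← e1, ← e2, heq']
  -- Step c: counting the subsets of NB meeting K
  have stepc : ((NB G w).powerset.filter (fun I => (I ∩ K).Nonempty)).card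
      = 2 ^ (d + 1) - 2 ^ (d + 1 - K.card) := by
    have hsplit := Finset.card_filter_add_card_filter_not
      (s := (NB G w).powerset) (p := fun I => (I ∩ K).Nonempty)
    have hneg : (NB G w).powerset.filter (fun I => ¬ (I ∩ K).Nonempty)
        = (NB G w \ K).powerset := by
      ext I
      simp only [Finset.mem_filter, Finset.mem_powerset, Finset.not_nonempty_iff_eq_empty,
        ← Finset.disjoint_iff_inter_eq_empty, Finset.subset_sdiff]
    rw [hneg, Finset.card_powerset, Finset.card_powerset, Finset.card_sdiff_of_subset hKsub,
      card_NB, ← hd] at hsplit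
    have hle : 2 ^ (d + 1 - K.card) ≤ 2 ^ (d + 1) :=
      Nat.pow_le_pow_right (by norm_num) (by omega)
    omega
  calc (2 ^ d - 1) *
      ((G.domSets.filter (fun S => (S ∩ NB G w).card = 1 ∧ S \ NB G w = R)).card)
      ≤ (2 ^ d - 1) * K.card := Nat.mul_le_mul_left _ stepa
    _ ≤ d * (2 ^ (d + 1) - 2 ^ (d + 1 - K.card)) := nat_key d K.card hdeg hKcard
    _ = d * ((NB G w).powerset.filter (fun I => (I ∩ K).Nonempty)).card := by rw [stepc]
    _ ≤ d * (G.domSets.filter (fun S => S \ NB G w = R)).card :=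
        Nat.mul_le_mul_left _ stepb

lemma bad_card (w : V) (hdeg : 0 < G.degree w) :
    (2 ^ G.degree w - 1) * (G.domSets.filter (fun S => (S ∩ NB G w).card = 1)).card
      ≤ G.degree w * G.domSets.card := by
  set t := G.domSets.image (fun S => S \ NB G w) with ht
  have hbad : (G.domSets.filter (fun S => (S ∩ NB G w).card = 1)).card
      = ∑ R ∈ t, ((G.domSets.filter (fun S => (S ∩ NB G w).card = 1)).filter
          (fun S => S \ NB G w = R)).card := by
    apply Finset.card_eq_sum_card_fiberwise
    intro S hS
    exact Finset.mem_image_of_mem _ (Finset.mem_filter.mp hS).1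
  have hall : G.domSets.card = ∑ R ∈ t, (G.domSets.filter (fun S => S \ NB G w = R)).card := by
    apply Finset.card_eq_sum_card_fiberwise
    intro S hS
    exact Finset.mem_image_of_mem _ hS
  rw [hbad, hall, Finset.mul_sum, Finset.mul_sum]
  apply Finset.sum_le_sum
  intro R hR
  rw [Finset.filter_filter]
  obtain ⟨S0, _, rfl⟩ := Finset.mem_image.mp hR
  exact fiber_ineq G w hdeg _ Finset.sdiff_disjoint

lemma exists_priv {S : Finset V} (hS : S ∈ G.domSets) {v : V} (hv : v ∈ S)
    (hnd : S.erase v ∉ G.domSets) : ∃ u, S ∩ NB G u = {v} := by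
  rw [mem_domSets] at hnd
  unfold SimpleGraph.IsDomSet at hnd
  push_neg at hnd
  obtain ⟨u, hu1, hu2⟩ := hnd
  refine ⟨u, ?_⟩
  ext x
  simp only [Finset.mem_inter, Finset.mem_singleton]
  constructor
  · rintro ⟨hxS, hxNB⟩
    by_contra hxv
    have hxe : x ∈ S.erase v := Finset.mem_erase.mpr ⟨hxv, hxS⟩
    rw [NB, Finset.mem_insert, SimpleGraph.mem_neighborFinset] at hxNB
    rcases hxNB with rfl | hadj
    · exact hu1 hxe
    · exact hu2 x hxe hadj.symm
  · rintro rfl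
    refine ⟨hv, ?_⟩
    rw [NB, Finset.mem_insert, SimpleGraph.mem_neighborFinset]
    by_cases huv : u = x
    · exact Or.inl huv.symm
    · have huS : u ∉ S := fun h => hu1 (Finset.mem_erase.mpr ⟨huv, h⟩)
      rcases (mem_domSets G).mp hS u with h | ⟨y, hyS, hadj⟩
      · exact absurd h huS
      · by_cases hyv : y = x
        · subst hyv; exact Or.inr hadj.symm
        · exact absurd hadj (hu2 y (Finset.mem_erase.mpr ⟨hyv, hyS⟩))

lemma crit_le_priv {S : Finset V} (hS : S ∈ G.domSets) :
    (S.filter (fun v => S.erase v ∉ G.domSets)).card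
      ≤ (Finset.univ.filter (fun w : V => (S ∩ NB G w).card = 1)).card := by
  apply Finset.card_le_card_of_injOn
    (fun v => if h : ∃ u, S ∩ NB G u = {v} then h.choose else v)
  · intro v hv
    rw [Finset.mem_coe, Finset.mem_filter] at hv
    have hex := exists_priv G hS hv.1 hv.2
    simp only [dif_pos hex]
    rw [Finset.mem_coe, Finset.mem_filter]
    refine ⟨Finset.mem_univ _, ?_⟩
    rw [hex.choose_spec]
    simp
  · intro v hv v' hv' heq
    simp only [Finset.coe_filter, Set.mem_setOf_eq] at hv hv'
    have hex := exists_priv G hS hv.1 hv.2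
    have hex' := exists_priv G hS hv'.1 hv'.2
    simp only [dif_pos hex, dif_pos hex'] at heq
    have h1 : S ∩ NB G hex.choose = {v} := hex.choose_spec
    have h2 : S ∩ NB G hex'.choose = {v'} := hex'.choose_spec
    rw [heq] at h1
    rw [h1] at h2
    exact Finset.singleton_inj.mp h2

lemma sum_card_eq :
    ∑ S ∈ G.domSets, S.card = ∑ v : V, (G.domSets.filter (fun S => v ∈ S)).card := by
  calc ∑ S ∈ G.domSets, S.card
      = ∑ S ∈ G.domSets, ∑ v : V, (if v ∈ S then 1 else 0) := by
        refine Finset.sum_congr rfl fun S _ => ?_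
        rw [← Finset.card_filter, Finset.filter_univ_mem]
    _ = ∑ v : V, ∑ S ∈ G.domSets, (if v ∈ S then 1 else 0) := Finset.sum_comm
    _ = ∑ v : V, (G.domSets.filter (fun S => v ∈ S)).card := by
        refine Finset.sum_congr rfl fun v _ => ?_
        rw [Finset.card_filter]

lemma two_mul_card_le (v : V) :
    2 * (G.domSets.filter (fun S => v ∈ S)).card
      ≤ G.domSets.card + (G.domSets.filter (fun S => v ∈ S ∧ S.erase v ∉ G.domSets)).card := by
  have hsplit :
      ((G.domSets.filter (fun S => v ∈ S)).filter (fun S => S.erase v ∈ G.domSets)).card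
      + ((G.domSets.filter (fun S => v ∈ S)).filter (fun S => ¬ S.erase v ∈ G.domSets)).card
      = (G.domSets.filter (fun S => v ∈ S)).card :=
    Finset.card_filter_add_card_filter_not _
  have hgood :
      ((G.domSets.filter (fun S => v ∈ S)).filter (fun S => S.erase v ∈ G.domSets)).card
      ≤ (G.domSets.filter (fun S => v ∉ S)).card := by
    apply Finset.card_le_card_of_injOn (fun S => S.erase v)
    · intro S hS
      rw [Finset.mem_coe, Finset.mem_filter, Finset.mem_filter] at hS
      rw [Finset.mem_coe, Finset.mem_filter]
      exact ⟨hS.2, Finset.notMem_erase _ _⟩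
    · intro S hS S' hS' heq
      simp only [Finset.coe_filter, Set.mem_setOf_eq, Finset.mem_filter] at hS hS'
      have heq' : S.erase v = S'.erase v := heq
      rw [← Finset.insert_erase hS.1.2, ← Finset.insert_erase hS'.1.2, heq']
  have htot : (G.domSets.filter (fun S => v ∈ S)).card
      + (G.domSets.filter (fun S => ¬ v ∈ S)).card = G.domSets.card :=
    Finset.card_filter_add_card_filter_not _
  have e : (G.domSets.filter (fun S => v ∈ S)).filter (fun S => ¬ S.erase v ∈ G.domSets)
      = G.domSets.filter (fun S => v ∈ S ∧ S.erase v ∉ G.domSets) := by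
    rw [Finset.filter_filter]
  rw [e] at hsplit
  omega

lemma sum_crit_le :
    ∑ v : V, (G.domSets.filter (fun S => v ∈ S ∧ S.erase v ∉ G.domSets)).card
      ≤ ∑ w : V, (G.domSets.filter (fun S => (S ∩ NB G w).card = 1)).card := by
  calc ∑ v : V, (G.domSets.filter (fun S => v ∈ S ∧ S.erase v ∉ G.domSets)).card
      = ∑ v : V, ∑ S ∈ G.domSets, (if v ∈ S ∧ S.erase v ∉ G.domSets then 1 else 0) := by
        refine Finset.sum_congr rfl fun v _ => ?_
        rw [Finset.card_filter]
    _ = ∑ S ∈ G.domSets, ∑ v : V, (if v ∈ S ∧ S.erase v ∉ G.domSets then 1 else 0) :=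
        Finset.sum_comm
    _ = ∑ S ∈ G.domSets, (S.filter (fun v => S.erase v ∉ G.domSets)).card := by
        refine Finset.sum_congr rfl fun S _ => ?_
        rw [← Finset.card_filter]
        congr 1
        ext v
        simp only [Finset.mem_filter, Finset.mem_univ, true_and]
    _ ≤ ∑ S ∈ G.domSets, (Finset.univ.filter (fun w : V => (S ∩ NB G w).card = 1)).card :=
        Finset.sum_le_sum (fun S hS => crit_le_priv G hS)
    _ = ∑ S ∈ G.domSets, ∑ w : V, (if (S ∩ NB G w).card = 1 then 1 else 0) := by
        refine Finset.sum_congr rfl fun S _ => ?_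
        rw [Finset.card_filter]
    _ = ∑ w : V, ∑ S ∈ G.domSets, (if (S ∩ NB G w).card = 1 then 1 else 0) := Finset.sum_comm
    _ = ∑ w : V, (G.domSets.filter (fun S => (S ∩ NB G w).card = 1)).card := by
        refine Finset.sum_congr rfl fun w _ => ?_
        rw [Finset.card_filter]

lemma nat_main :
    2 * ∑ S ∈ G.domSets, S.card
      ≤ Fintype.card V * G.domSets.card
        + ∑ w : V, (G.domSets.filter (fun S => (S ∩ NB G w).card = 1)).card := by
  rw [sum_card_eq G]
  calc 2 * ∑ v : V, (G.domSets.filter (fun S => v ∈ S)).card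
      = ∑ v : V, 2 * (G.domSets.filter (fun S => v ∈ S)).card := by rw [Finset.mul_sum]
    _ ≤ ∑ v : V, (G.domSets.card
          + (G.domSets.filter (fun S => v ∈ S ∧ S.erase v ∉ G.domSets)).card) :=
        Finset.sum_le_sum (fun v _ => two_mul_card_le G v)
    _ = Fintype.card V * G.domSets.card
          + ∑ v : V, (G.domSets.filter (fun S => v ∈ S ∧ S.erase v ∉ G.domSets)).card := by
        rw [Finset.sum_add_distrib, Finset.sum_const, Finset.card_univ, smul_eq_mul]
    _ ≤ _ := Nat.add_le_add_left (sum_crit_le G) _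

end AvdProof

/-- For a graph `G` on `n` vertices with no isolated vertices,
`avd(G) ≤ n/2 + Σ_{v} deg(v)/(2^(deg(v)+1) − 2)`. -/
theorem avd_le_half_add_degree_sum {V : Type*} [Fintype V] (G : SimpleGraph V)
    [DecidableRel G.Adj] (n : ℕ) (hn : n = Fintype.card V)
    (hiso : ∀ v : V, 0 < G.degree v) :
    G.avd ≤ (n : ℝ) / 2 +
      ∑ v : V, (G.degree v : ℝ) / (2 ^ (G.degree v + 1) - 2) := by
  classical
  subst hn
  have hDpos : 0 < G.domSets.card := AvdProof.domSets_card_pos G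
  have hDR : (0 : ℝ) < (G.domSets.card : ℝ) := by exact_mod_cast hDpos
  have hnat := AvdProof.nat_main G
  -- per-vertex bound on the "bad" counts, in ℝ
  have hw : ∀ w : V,
      (((G.domSets.filter
          (fun S => (S ∩ AvdProof.NB G w).card = 1)).card : ℕ) : ℝ) / (2 * (G.domSets.card : ℝ))
      ≤ (G.degree w : ℝ) / (2 ^ (G.degree w + 1) - 2) := by
    intro w
    have hb := AvdProof.bad_card G w (hiso w)
    set d := G.degree w with hd
    set B := (G.domSets.filter (fun S => (S ∩ AvdProof.NB G w).card = 1)).card with hB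
    have hd1 : 1 ≤ d := hiso w
    have hpow : 1 ≤ 2 ^ d := Nat.one_le_two_pow
    have hpos2 : (0 : ℝ) < 2 ^ (d + 1) - 2 := by
      have h4 : (4 : ℝ) ≤ 2 ^ (d + 1) := by
        calc (4 : ℝ) = 2 ^ 2 := by norm_num
          _ ≤ 2 ^ (d + 1) := by
              apply pow_le_pow_right₀ (by norm_num) (by omega)
      linarith
    rw [div_le_div_iff₀ (by positivity) hpos2]
    have hcast : ((2 : ℝ) ^ d - 1) * (B : ℝ) ≤ (d : ℝ) * (G.domSets.card : ℝ) := by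
      have := hb
      have hc : ((2 ^ d - 1 : ℕ) : ℝ) = (2 : ℝ) ^ d - 1 := by
        push_cast [hpow]
        ring
      calc ((2 : ℝ) ^ d - 1) * (B : ℝ) = ((2 ^ d - 1 : ℕ) : ℝ) * (B : ℝ) := by rw [hc]
        _ ≤ (d : ℝ) * (G.domSets.card : ℝ) := by exact_mod_cast hb
    have he : (2 : ℝ) ^ (d + 1) - 2 = 2 * ((2 : ℝ) ^ d - 1) := by
      rw [pow_succ]; ring
    calc (B : ℝ) * ((2 : ℝ) ^ (d + 1) - 2) = 2 * (((2 : ℝ) ^ d - 1) * (B : ℝ)) := by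
          rw [he]; ring
      _ ≤ 2 * ((d : ℝ) * (G.domSets.card : ℝ)) := by linarith
      _ = (d : ℝ) * (2 * (G.domSets.card : ℝ)) := by ring
  -- assemble
  rw [SimpleGraph.avd]
  have hNum : (∑ S ∈ G.domSets, (S.card : ℝ)) = ((∑ S ∈ G.domSets, S.card : ℕ) : ℝ) := by
    push_cast
    rfl
  rw [hNum, div_le_iff₀ hDR]
  set T := ∑ v : V, (G.degree v : ℝ) / (2 ^ (G.degree v + 1) - 2) with hT
  set SB := ∑ w : V,
    ((G.domSets.filter (fun S => (S ∩ AvdProof.NB G w).card = 1)).card : ℝ) with hSB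
  have hsumle : SB / (2 * (G.domSets.card : ℝ)) ≤ T := by
    rw [hSB, Finset.sum_div]
    exact Finset.sum_le_sum (fun w _ => hw w)
  have h6 : SB ≤ T * (2 * (G.domSets.card : ℝ)) :=
    (div_le_iff₀ (by positivity)).mp hsumle
  have hnatR : 2 * ((∑ S ∈ G.domSets, S.card : ℕ) : ℝ)
      ≤ (Fintype.card V : ℝ) * (G.domSets.card : ℝ) + SB := by
    rw [hSB]
    exact_mod_cast hnat
  nlinarith [hnatR, h6, hDR]
end

section
/- Let G be a finite simple graph on n vertices with minimum degree δ ≥ 1. Then avd(G) ≤ (n/2)·(1 + δ/(2^δ − 1)). -/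
open Finset

lemma num_L2 (d k : ℕ) (h1 : 1 ≤ d) (hk : d ≤ k) :
    (2^d - 1) * (k + 2) ≤ d * 2^(k+1) := by
  induction k, hk using Nat.le_induction with
  | base =>
    rcases eq_or_lt_of_le h1 with rfl | hd2
    · norm_num
    · have h2 : 2 ≤ d := hd2
      have h3 : (2^d - 1) * (d+2) ≤ 2^d * (d + 2) :=
        Nat.mul_le_mul_right _ (Nat.sub_le _ _)
      have h4 : 2^d * (d+2) ≤ d * 2^(d+1) := by
        calc 2^d*(d+2) = (d+2) * 2^d := by ring
          _ ≤ (2*d) * 2^d := Nat.mul_le_mul_right _ (by omega)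
          _ = d*2^(d+1) := by ring
      omega
  | succ k hk ih =>
    have h2 : 2^d - 1 ≤ d * 2^(k+1) := by
      have ha : 2^d ≤ 2^(k+1) := Nat.pow_le_pow_right (by norm_num) (by omega)
      have hb : 2^(k+1) ≤ d*2^(k+1) := Nat.le_mul_of_pos_left _ (by omega)
      omega
    calc (2^d-1)*(k+1+2) = (2^d-1)*(k+2) + (2^d-1) := by ring
      _ ≤ d*2^(k+1) + d*2^(k+1) := Nat.add_le_add ih h2
      _ = d*2^(k+1+1) := by ring

lemma num_Q (d k : ℕ) (h1 : 1 ≤ d) (hk : d ≤ k) :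
    ∀ j, 1 ≤ j → j ≤ k + 1 → (2^d - 1) * j * 2^j ≤ d * 2^(k+1) * (2^j - 1) := by
  intro j
  induction j with
  | zero => omega
  | succ j ih =>
    intro h1j hjk
    by_cases hj0 : j = 0
    · subst hj0
      simpa using le_trans (Nat.mul_le_mul_left _ (by omega : 2 ≤ k + 2))
        (num_L2 d k h1 hk)
    · have hj1 : 1 ≤ j := by omega
      have ihj := ih hj1 (by omega)
      have h2j : 1 ≤ 2^j := Nat.one_le_two_pow
      have e2 : 2^(j+1) - 1 = (2^j - 1) + 2^j := by
        have : 2^(j+1) = 2^j + 2^j := by ring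
        omega
      have estep : (2^d-1)*(j+2) ≤ d*2^(k+1) :=
        le_trans (Nat.mul_le_mul_left _ (by omega : j+2 ≤ k+2)) (num_L2 d k h1 hk)
      calc (2^d-1)*(j+1)*2^(j+1) = (2^d-1)*j*2^j + ((2^d-1)*(j+2))*2^j := by ring
        _ ≤ d*2^(k+1)*(2^j-1) + (d*2^(k+1))*2^j :=
            Nat.add_le_add ihj (Nat.mul_le_mul_right _ estep)
        _ = d*2^(k+1)*((2^j-1) + 2^j) := by ring
        _ = d*2^(k+1)*(2^(j+1)-1) := by rw [e2]

lemma num_key (d k j : ℕ) (h1 : 1 ≤ d) (hk : d ≤ k) (hj1 : 1 ≤ j) (hj : j ≤ k + 1) :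
    (2^d - 1) * j + d * 2^(k+1-j) ≤ d * 2^(k+1) := by
  have hq := num_Q d k h1 hk j hj1 hj
  have hpow : 2^(k+1-j) * 2^j = 2^(k+1) := by
    rw [← pow_add]; congr 1; omega
  have h2j : 1 ≤ 2^j := Nat.one_le_two_pow
  have hfin : ((2^d-1)*j + d*2^(k+1-j)) * 2^j ≤ (d*2^(k+1)) * 2^j := by
    have e1 : ((2^d-1)*j + d*2^(k+1-j)) * 2^j = (2^d-1)*j*2^j + d*2^(k+1) := by
      rw [add_mul]; congr 1; rw [mul_assoc, hpow]
    rw [e1]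
    calc (2^d-1)*j*2^j + d*2^(k+1) ≤ d*2^(k+1)*(2^j-1) + d*2^(k+1) :=
          Nat.add_le_add_right hq _
      _ = d*2^(k+1)*((2^j-1)+1) := by ring
      _ = d*2^(k+1)*2^j := by rw [show 2^j-1+1 = 2^j by omega]
      _ = _ := by ring
  exact Nat.le_of_mul_le_mul_right hfin (by positivity)

section Aux
variable {V : Type*} [Fintype V] (G : SimpleGraph V)

lemma mem_domSets' {S : Finset V} : S ∈ G.domSets ↔ G.IsDomSet S := by
  simp [SimpleGraph.domSets]

lemma domSet_mono {S T : Finset V} (h : G.IsDomSet S) (hST : S ⊆ T) : G.IsDomSet T := by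
  intro v
  rcases h v with hv | ⟨u, hu, ha⟩
  · exact Or.inl (hST hv)
  · exact Or.inr ⟨u, hST hu, ha⟩

lemma univ_mem_domSets : Finset.univ ∈ G.domSets :=
  (mem_domSets' G).mpr (fun v => Or.inl (mem_univ v))

variable [DecidableRel G.Adj] [DecidableEq V]

/-- closed neighborhood as a finset -/
def KN (u : V) : Finset V := insert u (G.neighborFinset u)

lemma card_KN (u : V) : (KN G u).card = G.degree u + 1 := by
  rw [KN, Finset.card_insert_of_notMem (by simp), G.card_neighborFinset_eq_degree]

lemma exists_private {S : Finset V} {v : V} (hS : G.IsDomSet S) (hv : v ∈ S)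
    (hbad : ¬ G.IsDomSet (S.erase v)) : ∃ u, S ∩ KN G u = {v} := by
  rw [SimpleGraph.IsDomSet] at hbad
  push_neg at hbad
  obtain ⟨u, hu1, hu2⟩ := hbad
  refine ⟨u, ?_⟩
  ext y
  simp only [Finset.mem_inter, Finset.mem_singleton, KN, Finset.mem_insert,
    SimpleGraph.mem_neighborFinset]
  constructor
  · rintro ⟨hyS, hyK⟩
    by_contra hne
    have hyS' : y ∈ S.erase v := Finset.mem_erase.mpr ⟨hne, hyS⟩
    rcases hyK with rfl | hadj
    · exact hu1 hyS'
    · exact hu2 y hyS' hadj.symm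
  · intro hyv
    have key : v ∈ S ∧ (v = u ∨ G.Adj u v) := by
      refine ⟨hv, ?_⟩
      rcases hS u with huS | ⟨x, hxS, hadj⟩
      · have huv : u = v := by
          by_contra hne
          exact hu1 (Finset.mem_erase.mpr ⟨hne, huS⟩)
        exact Or.inl huv.symm
      · have hxv : x = v := by
          by_contra hne
          exact hu2 x (Finset.mem_erase.mpr ⟨hne, hxS⟩) hadj
        subst hxv
        exact Or.inr hadj.symm
    rw [hyv]
    exact key

end Aux

section Fiber
variable {V : Type*} [Fintype V] (G : SimpleGraph V) [DecidableRel G.Adj] [DecidableEq V]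

lemma fiber_bound (hδ1 : 1 ≤ G.minDegree) (u : V) (R : Finset V) :
    (2 ^ G.minDegree - 1) *
      ((G.domSets.filter (fun S => (S ∩ KN G u).card = 1)).filter
        (fun S => S \ KN G u = R)).card
    ≤ G.minDegree * (G.domSets.filter (fun S => S \ KN G u = R)).card := by
  set δ := G.minDegree with hδdef
  set F := ((G.domSets.filter (fun S => (S ∩ KN G u).card = 1)).filter
      (fun S => S \ KN G u = R)) with hFdef
  rcases F.eq_empty_or_nonempty with hF | ⟨S₀, hS₀⟩
  · simp [hF]
  · have hS₀' := hS₀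
    rw [hFdef, Finset.mem_filter, Finset.mem_filter] at hS₀'
    obtain ⟨⟨hS₀D, hS₀card⟩, hS₀R⟩ := hS₀'
    have hRK : R ∩ KN G u = ∅ := by
      rw [← hS₀R]; exact Finset.sdiff_inter_self _ _
    have hRKmem : ∀ y ∈ R, y ∉ KN G u := by
      intro y hy hyK
      have : y ∈ R ∩ KN G u := Finset.mem_inter.mpr ⟨hy, hyK⟩
      simp [hRK] at this
    set J := (KN G u).filter (fun x => insert x R ∈ G.domSets) with hJdef
    -- F has the same cardinality as J
    have hJF : F.card = J.card := by
      symm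
      apply Finset.card_bij (fun x _ => insert x R)
      · intro x hx
        rw [hJdef, Finset.mem_filter] at hx
        obtain ⟨hxK, hxD⟩ := hx
        rw [hFdef, Finset.mem_filter, Finset.mem_filter]
        have hxR : x ∉ R := fun h => hRKmem x h hxK
        have hint : insert x R ∩ KN G u = {x} := by
          ext y
          simp only [Finset.mem_inter, Finset.mem_insert, Finset.mem_singleton]
          constructor
          · rintro ⟨rfl | hyR, hyK⟩
            · rfl
            · exact absurd hyK (hRKmem y hyR)
          · rintro rfl; exact ⟨Or.inl rfl, hxK⟩
        have hsdiff : insert x R \ KN G u = R := by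
          ext y
          simp only [Finset.mem_sdiff, Finset.mem_insert]
          constructor
          · rintro ⟨rfl | hyR, hyK⟩
            · exact absurd hxK hyK
            · exact hyR
          · intro hyR; exact ⟨Or.inr hyR, hRKmem y hyR⟩
        exact ⟨⟨hxD, by rw [hint]; simp⟩, hsdiff⟩
      · intro x hx x' hx' heq
        rw [hJdef, Finset.mem_filter] at hx hx'
        have hxR : x ∉ R := fun h => hRKmem x h hx.1
        have : x ∈ insert x' R := heq ▸ Finset.mem_insert_self x R
        rcases Finset.mem_insert.mp this with h | h
        · exact h
        · exact absurd h hxR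
      · intro S hS
        rw [hFdef, Finset.mem_filter, Finset.mem_filter] at hS
        obtain ⟨⟨hSD, hScard⟩, hSR⟩ := hS
        obtain ⟨x, hx⟩ := Finset.card_eq_one.mp hScard
        have hxK : x ∈ KN G u := by
          have : x ∈ S ∩ KN G u := hx ▸ Finset.mem_singleton_self x
          exact (Finset.mem_inter.mp this).2
        have hSx : S = insert x R := by
          have h1 : S \ KN G u ∪ S ∩ KN G u = S := Finset.sdiff_union_inter S (KN G u)
          rw [hSR, hx] at h1
          rw [← h1, Finset.union_comm, Finset.insert_eq]
        refine ⟨x, ?_, hSx.symm⟩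
        rw [hJdef, Finset.mem_filter]
        exact ⟨hxK, hSx ▸ hSD⟩
    have hJK : J ⊆ KN G u := Finset.filter_subset _ _
    set k := G.degree u with hkdef
    have hm : (KN G u).card = k + 1 := card_KN G u
    have hjk : J.card ≤ k + 1 := hm ▸ Finset.card_le_card hJK
    have hj1 : 1 ≤ J.card := by
      rw [← hJF]
      exact Finset.card_pos.mpr ⟨S₀, hS₀⟩
    have hδk : δ ≤ k := G.minDegree_le_degree u
    set H := ((KN G u).powerset).filter (fun X => (X ∩ J).Nonempty) with hHdef
    have hHcard : H.card + 2 ^ (k + 1 - J.card) = 2 ^ (k + 1) := by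
      have h1 : H.card + (((KN G u).powerset).filter
          (fun X => ¬ (X ∩ J).Nonempty)).card = ((KN G u).powerset).card :=
        Finset.card_filter_add_card_filter_not _
      have h2 : ((KN G u).powerset).filter (fun X => ¬ (X ∩ J).Nonempty)
          = (KN G u \ J).powerset := by
        ext X
        simp only [Finset.mem_filter, Finset.mem_powerset, Finset.not_nonempty_iff_eq_empty,
          Finset.subset_sdiff, ← Finset.disjoint_iff_inter_eq_empty]
      rw [h2, Finset.card_powerset, Finset.card_powerset, Finset.card_sdiff_of_subset hJK, hm] at h1
      exact h1
    have hHle : H.card ≤ (G.domSets.filter (fun S => S \ KN G u = R)).card := by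
      apply Finset.card_le_card_of_injOn (fun X => R ∪ X)
      · intro X hX
        have hX2 : X ∈ H := hX
        rw [hHdef, Finset.mem_filter, Finset.mem_powerset] at hX2
        obtain ⟨hXK, x, hxXJ⟩ := hX2
        rw [Finset.mem_inter] at hxXJ
        obtain ⟨hxX, hxJ⟩ := hxXJ
        rw [hJdef, Finset.mem_filter] at hxJ
        rw [Finset.mem_coe, Finset.mem_filter]
        constructor
        · rw [mem_domSets']
          apply domSet_mono G ((mem_domSets' G).mp hxJ.2)
          intro y hy
          rcases Finset.mem_insert.mp hy with rfl | hyR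
          · exact Finset.mem_union_right _ hxX
          · exact Finset.mem_union_left _ hyR
        · ext y
          simp only [Finset.mem_sdiff, Finset.mem_union]
          constructor
          · rintro ⟨hyR | hyX, hyK⟩
            · exact hyR
            · exact absurd (hXK hyX) hyK
          · intro hyR
            exact ⟨Or.inl hyR, hRKmem y hyR⟩
      · intro X hX X' hX' heq
        have hX2 : X ∈ H := hX
        have hX2' : X' ∈ H := hX'
        rw [hHdef, Finset.mem_filter, Finset.mem_powerset] at hX2 hX2'
        have eX : (R ∪ X) ∩ KN G u = X := by
          rw [Finset.union_inter_distrib_right, hRK, Finset.empty_union,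
            Finset.inter_eq_left.mpr hX2.1]
        have eX' : (R ∪ X') ∩ KN G u = X' := by
          rw [Finset.union_inter_distrib_right, hRK, Finset.empty_union,
            Finset.inter_eq_left.mpr hX2'.1]
        rw [← eX, ← eX']
        exact congrArg (· ∩ KN G u) heq
    -- numeric conclusion
    have hnum := num_key δ k J.card hδ1 hδk hj1 hjk
    have h7 : δ * 2 ^ (k+1) = δ * H.card + δ * 2 ^ (k + 1 - J.card) := by
      rw [← hHcard]; ring
    have h6 : (2 ^ δ - 1) * J.card ≤ δ * H.card := by omega
    calc (2 ^ δ - 1) * F.card = (2 ^ δ - 1) * J.card := by rw [hJF]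
      _ ≤ δ * H.card := h6
      _ ≤ δ * (G.domSets.filter (fun S => S \ KN G u = R)).card :=
          Nat.mul_le_mul_left _ hHle
end Fiber

section Main
open scoped Classical
variable {V : Type*} [Fintype V] (G : SimpleGraph V) [DecidableRel G.Adj] [DecidableEq V]

lemma Eu_bound (hδ1 : 1 ≤ G.minDegree) (u : V) :
    (2 ^ G.minDegree - 1) * (G.domSets.filter (fun S => (S ∩ KN G u).card = 1)).card
      ≤ G.minDegree * G.domSets.card := by
  have hE := Finset.card_eq_sum_card_fiberwise
    (f := fun S => S \ KN G u) (s := G.domSets.filter (fun S => (S ∩ KN G u).card = 1))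
    (t := Finset.univ) (fun _ _ => Finset.mem_univ _)
  have hD := Finset.card_eq_sum_card_fiberwise
    (f := fun S => S \ KN G u) (s := G.domSets) (t := Finset.univ)
    (fun _ _ => Finset.mem_univ _)
  rw [hE, hD, Finset.mul_sum, Finset.mul_sum]
  exact Finset.sum_le_sum (fun R _ => fiber_bound G hδ1 u R)

lemma count2 :
    ∑ v : V, (G.domSets.filter (fun (S : Finset V) => v ∈ S ∧ ¬ G.IsDomSet (S.erase v))).card
    ≤ ∑ u : V, (G.domSets.filter (fun S => (S ∩ KN G u).card = 1)).card := by
  classical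
  rw [← Finset.card_sigma, ← Finset.card_sigma]
  apply Finset.card_le_card_of_injOn
    (fun p => (⟨if h : ∃ u, p.2 ∩ KN G u = {p.1} then h.choose else p.1, p.2⟩ :
      (_ : V) × Finset V))
  · rintro ⟨v, S⟩ hp
    rw [Finset.mem_coe, Finset.mem_sigma] at hp
    obtain ⟨-, hS⟩ := hp
    rw [Finset.mem_filter] at hS
    obtain ⟨hSD, hvS, hbad⟩ := hS
    have h : ∃ u, S ∩ KN G u = {v} :=
      exists_private G ((mem_domSets' G).mp hSD) hvS hbad
    rw [Finset.mem_coe, Finset.mem_sigma]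
    refine ⟨Finset.mem_univ _, ?_⟩
    simp only [dif_pos h]
    rw [Finset.mem_filter]
    exact ⟨hSD, by rw [h.choose_spec]; simp⟩
  · rintro ⟨v, S⟩ hp ⟨v', S'⟩ hp' heq
    have hS : S = S' := congrArg Sigma.snd heq
    subst hS
    rw [Finset.mem_coe, Finset.mem_sigma, Finset.mem_filter] at hp hp'
    have h : ∃ u, S ∩ KN G u = {v} :=
      exists_private G ((mem_domSets' G).mp hp.2.1) hp.2.2.1 hp.2.2.2
    have h' : ∃ u, S ∩ KN G u = {v'} :=
      exists_private G ((mem_domSets' G).mp hp'.2.1) hp'.2.2.1 hp'.2.2.2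
    have hfst : h.choose = h'.choose := by
      have := congrArg Sigma.fst heq
      simpa only [dif_pos h, dif_pos h'] using this
    have hvv : v = v' := by
      have h1 := h.choose_spec
      have h2 := h'.choose_spec
      rw [hfst] at h1
      rw [h1] at h2
      exact Finset.singleton_injective h2
    subst hvv
    rfl

lemma count1 :
    2 * ∑ S ∈ G.domSets, S.card
      = Fintype.card V * G.domSets.card
        + ∑ v : V, (G.domSets.filter (fun (S : Finset V) => v ∈ S ∧ ¬ G.IsDomSet (S.erase v))).card := by
  classical
  have hcard : ∀ S : Finset V, S.card = ∑ v : V, if v ∈ S then 1 else 0 := by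
    intro S
    rw [← Finset.card_filter]
    congr 1
    exact (Finset.filter_univ_mem S).symm
  have ha : ∑ S ∈ G.domSets, S.card
      = ∑ v : V, (G.domSets.filter (fun S => v ∈ S)).card := by
    calc ∑ S ∈ G.domSets, S.card
        = ∑ S ∈ G.domSets, ∑ v : V, (if v ∈ S then 1 else 0) :=
          Finset.sum_congr rfl (fun S _ => hcard S)
      _ = ∑ v : V, ∑ S ∈ G.domSets, (if v ∈ S then 1 else 0) := Finset.sum_comm
      _ = ∑ v : V, (G.domSets.filter (fun S => v ∈ S)).card := by
          refine Finset.sum_congr rfl (fun v _ => ?_)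
          rw [Finset.card_filter]
  have hb : ∀ v : V, (G.domSets.filter (fun S => v ∈ S)).card
      = (G.domSets.filter (fun S => ¬ v ∈ S)).card
        + (G.domSets.filter (fun (S : Finset V) => v ∈ S ∧ ¬ G.IsDomSet (S.erase v))).card := by
    intro v
    have hsplit : (G.domSets.filter (fun (S : Finset V) => v ∈ S ∧ G.IsDomSet (S.erase v))).card
        + (G.domSets.filter (fun (S : Finset V) => v ∈ S ∧ ¬ G.IsDomSet (S.erase v))).card
        = (G.domSets.filter (fun S => v ∈ S)).card := by
      rw [← Finset.filter_filter, ← Finset.filter_filter]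
      exact Finset.card_filter_add_card_filter_not _
    have hbij : (G.domSets.filter (fun (S : Finset V) => v ∈ S ∧ G.IsDomSet (S.erase v))).card
        = (G.domSets.filter (fun S => ¬ v ∈ S)).card := by
      apply Finset.card_bij (fun S _ => S.erase v)
      · intro S hS
        rw [Finset.mem_filter] at hS
        obtain ⟨hSD, hvS, hdom⟩ := hS
        rw [Finset.mem_filter]
        exact ⟨(mem_domSets' G).mpr hdom, Finset.notMem_erase v S⟩
      · intro S hS S' hS' heq
        rw [Finset.mem_filter] at hS hS'
        rw [← Finset.insert_erase hS.2.1, ← Finset.insert_erase hS'.2.1, heq]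
      · intro S' hS'
        rw [Finset.mem_filter] at hS'
        obtain ⟨hS'D, hvS'⟩ := hS'
        refine ⟨insert v S', ?_, Finset.erase_insert hvS'⟩
        rw [Finset.mem_filter]
        refine ⟨(mem_domSets' G).mpr
          (domSet_mono G ((mem_domSets' G).mp hS'D) (Finset.subset_insert v S')),
          Finset.mem_insert_self v S', ?_⟩
        rw [Finset.erase_insert hvS']
        exact (mem_domSets' G).mp hS'D
    omega
  have hc : ∀ v : V, (G.domSets.filter (fun S => v ∈ S)).card
      + (G.domSets.filter (fun S => ¬ v ∈ S)).card = G.domSets.card :=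
    fun v => Finset.card_filter_add_card_filter_not _
  calc 2 * ∑ S ∈ G.domSets, S.card
      = ∑ v : V, (G.domSets.filter (fun S => v ∈ S)).card
        + ∑ v : V, (G.domSets.filter (fun S => v ∈ S)).card := by rw [ha]; ring
    _ = ∑ v : V, (G.domSets.filter (fun S => v ∈ S)).card
        + ∑ v : V, ((G.domSets.filter (fun S => ¬ v ∈ S)).card
          + (G.domSets.filter (fun (S : Finset V) => v ∈ S ∧ ¬ G.IsDomSet (S.erase v))).card) := by
        rw [Finset.sum_congr rfl (fun v _ => hb v)]
    _ = ∑ v : V, ((G.domSets.filter (fun S => v ∈ S)).card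
          + (G.domSets.filter (fun S => ¬ v ∈ S)).card)
        + ∑ v : V, (G.domSets.filter (fun (S : Finset V) => v ∈ S ∧ ¬ G.IsDomSet (S.erase v))).card := by
        rw [Finset.sum_add_distrib, Finset.sum_add_distrib]; ring
    _ = ∑ v : V, G.domSets.card
        + ∑ v : V, (G.domSets.filter (fun (S : Finset V) => v ∈ S ∧ ¬ G.IsDomSet (S.erase v))).card := by
        rw [Finset.sum_congr rfl (fun v _ => hc v)]
    _ = Fintype.card V * G.domSets.card
        + ∑ v : V, (G.domSets.filter (fun (S : Finset V) => v ∈ S ∧ ¬ G.IsDomSet (S.erase v))).card := by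
        rw [Finset.sum_const, smul_eq_mul, Finset.card_univ]

lemma main_nat (hδ1 : 1 ≤ G.minDegree) :
    (2 ^ G.minDegree - 1) * (2 * ∑ S ∈ G.domSets, S.card)
      ≤ (2 ^ G.minDegree - 1 + G.minDegree) * (Fintype.card V * G.domSets.card) := by
  classical
  set δ := G.minDegree
  rw [count1]
  have h1 : (2 ^ δ - 1) * ∑ v : V,
      (G.domSets.filter (fun (S : Finset V) => v ∈ S ∧ ¬ G.IsDomSet (S.erase v))).card
      ≤ Fintype.card V * (δ * G.domSets.card) := by
    calc (2 ^ δ - 1) * ∑ v : V,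
        (G.domSets.filter (fun (S : Finset V) => v ∈ S ∧ ¬ G.IsDomSet (S.erase v))).card
        ≤ (2 ^ δ - 1) * ∑ u : V,
          (G.domSets.filter (fun S => (S ∩ KN G u).card = 1)).card :=
          Nat.mul_le_mul_left _ (count2 G)
      _ = ∑ u : V, (2 ^ δ - 1) *
          (G.domSets.filter (fun S => (S ∩ KN G u).card = 1)).card := Finset.mul_sum _ _ _
      _ ≤ ∑ _u : V, δ * G.domSets.card :=
          Finset.sum_le_sum (fun u _ => Eu_bound G hδ1 u)
      _ = Fintype.card V * (δ * G.domSets.card) := by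
          rw [Finset.sum_const, smul_eq_mul, Finset.card_univ]
  calc (2 ^ δ - 1) * (Fintype.card V * G.domSets.card
        + ∑ v : V, (G.domSets.filter (fun (S : Finset V) => v ∈ S ∧ ¬ G.IsDomSet (S.erase v))).card)
      = (2 ^ δ - 1) * (Fintype.card V * G.domSets.card)
        + (2 ^ δ - 1) * ∑ v : V,
          (G.domSets.filter (fun (S : Finset V) => v ∈ S ∧ ¬ G.IsDomSet (S.erase v))).card := by ring
    _ ≤ (2 ^ δ - 1) * (Fintype.card V * G.domSets.card)
        + Fintype.card V * (δ * G.domSets.card) := Nat.add_le_add_left h1 _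
    _ = (2 ^ δ - 1 + δ) * (Fintype.card V * G.domSets.card) := by ring

end Main

/-- For a graph `G` on `n` vertices with minimum degree `δ ≥ 1`,
`avd(G) ≤ (n/2)·(1 + δ/(2^δ − 1))`. -/
theorem avd_le_of_minDegree_bound {V : Type*} [Fintype V] (G : SimpleGraph V)
    [DecidableRel G.Adj] (n δ : ℕ) (hn : n = Fintype.card V)
    (hδ : δ = G.minDegree) (hδ1 : 1 ≤ δ) :
    G.avd ≤ (n : ℝ) / 2 * (1 + (δ : ℝ) / (2 ^ δ - 1)) := by
  classical
  subst hn hδ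
  set δ := G.minDegree with hδdef
  set N := Fintype.card V
  have hmain := main_nat G hδ1
  have hD0 : 0 < G.domSets.card := Finset.card_pos.mpr ⟨Finset.univ, univ_mem_domSets G⟩
  have h12 : (1 : ℕ) ≤ 2 ^ δ := Nat.one_le_two_pow
  have hcast : ((2 ^ δ - 1 : ℕ) : ℝ) = 2 ^ δ - 1 := by
    rw [Nat.cast_sub h12]; push_cast; ring
  have hmainR : ((2:ℝ) ^ δ - 1) * (2 * ∑ S ∈ G.domSets, (S.card : ℝ))
      ≤ ((2:ℝ) ^ δ - 1 + δ) * (N * G.domSets.card) := by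
    have := (Nat.cast_le (α := ℝ)).mpr hmain
    rw [← hδdef] at this
    push_cast [hcast] at this
    convert this using 2 <;> push_cast <;> ring
  have ha : (0:ℝ) < (2:ℝ) ^ δ - 1 := by
    have : (2:ℝ) ^ 1 ≤ (2:ℝ) ^ δ := by
      apply pow_le_pow_right₀ (by norm_num) hδ1
    simp at this
    linarith
  have hd : (0:ℝ) < (G.domSets.card : ℝ) := by exact_mod_cast hD0
  rw [SimpleGraph.avd, div_le_iff₀ hd]
  have hexp : ((N:ℝ) / 2 * (1 + (δ:ℝ) / (2 ^ δ - 1))) * G.domSets.card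
      = (((2:ℝ)^δ - 1 + δ) * (N * G.domSets.card)) / (2 * ((2:ℝ)^δ - 1)) := by
    field_simp
  rw [hexp, le_div_iff₀ (by positivity)]
  nlinarith [hmainR]
end
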